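/- Let G be a bipartite graph with bipartition V(G) = A ⊎ B, without isolated vertices, and let m = |E(G)|. Let G' be the graph obtained from G by adding two new vertices s and t, an edge sa for every a ∈ A, and an edge tb for every b ∈ B. Then for all nonnegative integers p and q with q ≤ m, the following are equivalent: (1) there exists S ⊆ V(G) with |S| ≤ p such that at least q edges of G are incident to a vertex of S; (2) there exist X ⊆ V(G) with |X| ≤ p and F ⊆ E(G) with |F| ≤ m − q such that s and t lie in different connected components of G' − (X, F). -/

import Mathlib

/-- A multigraph on vertex type `V` with edge type `E`: each edge has an
unordered pair of endpoints. -/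
structure Multigraph (V : Type*) (E : Type*) where
  ends : E → Sym2 V

namespace Multigraph

variable {V E : Type*}

/-- The multigraph has no self-loops. -/
def Loopless (G : Multigraph V E) : Prop := ∀ e : E, ¬ (G.ends e).IsDiag

/-- Two vertices are adjacent if some edge joins them. -/
def Adj (G : Multigraph V E) (a b : V) : Prop := ∃ e : E, G.ends e = s(a, b)

/-- The (open) neighbourhood of a vertex. -/
def nbhd (G : Multigraph V E) (v : V) : Set V := {u | G.Adj v u}

/-- The neighbourhood `N_G(D)` of a set of vertices. -/
def setNbhd (G : Multigraph V E) (D : Set V) : Set V :=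
  {u | u ∉ D ∧ ∃ d ∈ D, G.Adj u d}

/-- One step along an edge of `G − (X, F)`. -/
def Step (G : Multigraph V E) (X : Set V) (F : Set E) (a b : V) : Prop :=
  a ∉ X ∧ b ∉ X ∧ ∃ e : E, e ∉ F ∧ G.ends e = s(a, b)

/-- `u` and `v` lie in the same connected component of `G − (X, F)`. -/
def Conn (G : Multigraph V E) (X : Set V) (F : Set E) (u v : V) : Prop :=
  u ∉ X ∧ v ∉ X ∧ Relation.ReflTransGen (G.Step X F) u v

end Multigraph

/-- `R` is an equivalence relation on the set `T` (and vanishes outside `T`). -/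
def IsEquivOn {V : Type*} (T : Set V) (R : V → V → Prop) : Prop :=
  (∀ u v, R u v → u ∈ T ∧ v ∈ T) ∧ (∀ u ∈ T, R u u) ∧
    (∀ u v, R u v → R v u) ∧ (∀ u v w, R u v → R v w → R u w)

/-- `(X, F)` is a solution to the MMCU instance `(G, T, R, k, l)`. -/
def IsSolution {V E : Type*} (G : Multigraph V E) (T : Set V) (R : V → V → Prop)
    (k l : ℕ) (X : Set V) (F : Set E) : Prop :=
  X ⊆ Tᶜ ∧ X.ncard ≤ k ∧ F.ncard ≤ l ∧
    ∀ u ∈ T, ∀ v ∈ T, (G.Conn X F u v ↔ R u v)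

/-- `(X, F)` is a minimal solution to the MMCU instance `(G, T, R, k, l)`. -/
def IsMinSolution {V E : Type*} (G : Multigraph V E) (T : Set V) (R : V → V → Prop)
    (k l : ℕ) (X : Set V) (F : Set E) : Prop :=
  IsSolution G T R k l X F ∧
    ∀ X' F', IsSolution G T R k l X' F' → X' ⊆ X → F' ⊆ F → X' = X ∧ F' = F

/-- The graph `G'` obtained from the bipartite graph `G` (with parts `A` and `B`) by
adding two new vertices `s = Sum.inr true` and `t = Sum.inr false`, an edge `sa` for
every `a ∈ A` and an edge `tb` for every `b ∈ B`. -/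
def addST {V E : Type*} (G : Multigraph V E) (A B : Set V) :
    Multigraph (V ⊕ Bool) (E ⊕ (↥A ⊕ ↥B)) where
  ends := fun f =>
    match f with
    | Sum.inl e => (G.ends e).map Sum.inl
    | Sum.inr (Sum.inl a) => s(Sum.inr true, Sum.inl a.1)
    | Sum.inr (Sum.inr b) => s(Sum.inr false, Sum.inl b.1)

/-- For a bipartite graph `G` with parts `A, B`, no isolated vertices
and `m` edges, and the graph `G'` obtained by adding `s` adjacent to all of `A` and `t`
adjacent to all of `B`: for all `p` and `q ≤ m`, there is a set `S` of at most `p`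
vertices of `G` covering at least `q` edges of `G` if and only if there are `X ⊆ V(G)`
with `|X| ≤ p` and `F ⊆ E(G)` with `|F| ≤ m − q` whose deletion separates `s` from `t`
in `G'`. -/
theorem stmt12 {V E : Type*} [Fintype V] [Fintype E]
    (G : Multigraph V E) (hG : G.Loopless)
    (A B : Set V) (hpart : A ∪ B = Set.univ) (hdisj : Disjoint A B)
    (hbip : ∀ e : E, ∃ a ∈ A, ∃ b ∈ B, G.ends e = s(a, b))
    (hiso : ∀ v : V, ∃ e : E, v ∈ G.ends e)
    (p q : ℕ) (hq : q ≤ Fintype.card E) :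
    (∃ S : Set V, S.ncard ≤ p ∧ q ≤ {e : E | ∃ x ∈ S, x ∈ G.ends e}.ncard) ↔
      (∃ (X : Set V) (F : Set E), X.ncard ≤ p ∧ F.ncard ≤ Fintype.card E - q ∧
        ¬ (addST G A B).Conn (Sum.inl '' X)
            (Sum.inl '' F : Set (E ⊕ (↥A ⊕ ↥B)))
            (Sum.inr true) (Sum.inr false)) := by
  constructor
  · rintro ⟨S, hSp, hScov⟩
    refine ⟨S, {e : E | ∃ x ∈ S, x ∈ G.ends e}ᶜ, hSp, ?_, ?_⟩
    · have h1 : {e : E | ∃ x ∈ S, x ∈ G.ends e}.ncard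
          + {e : E | ∃ x ∈ S, x ∈ G.ends e}ᶜ.ncard = Fintype.card E := by
        rw [Set.ncard_add_ncard_compl, Nat.card_eq_fintype_card]
      omega
    · rintro ⟨-, -, hpath⟩
      have key : ∀ w, Relation.ReflTransGen
          ((addST G A B).Step (Sum.inl '' S)
            (Sum.inl '' ({e : E | ∃ x ∈ S, x ∈ G.ends e}ᶜ : Set E)))
          (Sum.inr true) w →
          (w = Sum.inr true ∨ ∃ v ∈ A, v ∉ S ∧ w = Sum.inl v) := by
        intro w h
        induction h with
        | refl => exact Or.inl rfl
        | @tail b c h step ih =>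
          obtain ⟨hb1, hc1, f, hfF, hends⟩ := step
          rcases ih with rfl | ⟨v, hvA, hvS, rfl⟩
          · -- from s
            rcases f with e | a | b'
            · exfalso
              have : Sum.inr true ∈ (G.ends e).map (Sum.inl : V → V ⊕ Bool) := by
                rw [show (addST G A B).ends (Sum.inl e) = (G.ends e).map Sum.inl from rfl] at hends
                rw [hends]; exact Sym2.mem_mk_left _ _
              rw [Sym2.mem_map] at this
              obtain ⟨x, -, hx⟩ := this
              exact (Sum.inl_ne_inr hx).elim
            · have hends' : s(Sum.inr true, Sum.inl a.1) = s(Sum.inr true, c) := hends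
              rw [Sym2.eq_iff] at hends'
              rcases hends' with ⟨-, rfl⟩ | ⟨h1, h2⟩
              · refine Or.inr ⟨a.1, a.2, ?_, rfl⟩
                intro hmem
                exact hc1 ⟨a.1, hmem, rfl⟩
              · exact absurd h2 (by simp)
            · have hends' : s(Sum.inr false, Sum.inl b'.1) = s(Sum.inr true, c) := hends
              rw [Sym2.eq_iff] at hends'
              rcases hends' with ⟨h1, -⟩ | ⟨-, h2⟩
              · exact absurd h1 (by simp)
              · exact absurd h2 (by simp)
          · -- from inl v, v ∈ A, v ∉ S
            rcases f with e | a | b'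
            · obtain ⟨a0, ha0, b0, hb0, hends0⟩ := hbip e
              have hends' : s((Sum.inl a0 : V ⊕ Bool), Sum.inl b0) = s(Sum.inl v, c) := by
                have : (addST G A B).ends (Sum.inl e) = (G.ends e).map Sum.inl := rfl
                rw [this, hends0] at hends
                simpa using hends
              have hecov : e ∈ {e : E | ∃ x ∈ S, x ∈ G.ends e} := by
                by_contra hne
                exact hfF ⟨e, hne, rfl⟩
              obtain ⟨x, hxS, hxe⟩ := hecov
              rw [hends0, Sym2.mem_iff] at hxe
              rw [Sym2.eq_iff] at hends'
              rcases hends' with ⟨ha, hb⟩ | ⟨ha, hb⟩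
              · -- a0 = v, c = inl b0
                have hva : a0 = v := Sum.inl.inj ha
                rcases hxe with rfl | rfl
                · exact absurd (hva ▸ hxS) hvS
                · exact absurd (⟨x, hxS, hb.symm ▸ rfl⟩ : c ∈ Sum.inl '' S) hc1
              · -- b0 = v : contradiction with disjointness
                have : b0 = v := Sum.inl.inj hb
                exact absurd hvA ((Set.disjoint_left.1 hdisj · (this ▸ hb0)))
            · have hends' : s(Sum.inr true, Sum.inl a.1) = s(Sum.inl v, c) := hends
              rw [Sym2.eq_iff] at hends'
              rcases hends' with ⟨h1, -⟩ | ⟨h2, -⟩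
              · exact absurd h1 (by simp)
              · exact Or.inl h2.symm
            · have hends' : s(Sum.inr false, Sum.inl b'.1) = s(Sum.inl v, c) := hends
              rw [Sym2.eq_iff] at hends'
              rcases hends' with ⟨h1, -⟩ | ⟨-, h2⟩
              · exact absurd h1 (by simp)
              · have : b'.1 = v := Sum.inl.inj h2
                exact absurd hvA ((Set.disjoint_left.1 hdisj · (this ▸ b'.2)))
      rcases key _ hpath with h | ⟨v, -, -, h⟩
      · exact Bool.noConfusion (Sum.inr.inj h)
      · exact (Sum.inr_ne_inl h).elim
  · rintro ⟨X, F, hXp, hF, hsep⟩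
    refine ⟨X, hXp, ?_⟩
    have hsub : {e : E | ∃ x ∈ X, x ∈ G.ends e}ᶜ ⊆ F := by
      intro e he
      by_contra heF
      obtain ⟨a, ha, b, hb, hends0⟩ := hbip e
      have haX : a ∉ X := fun h => he ⟨a, h, by rw [hends0]; exact Sym2.mem_mk_left _ _⟩
      have hbX : b ∉ X := fun h => he ⟨b, h, by rw [hends0]; exact Sym2.mem_mk_right _ _⟩
      apply hsep
      refine ⟨by simp, by simp, ?_⟩
      have step1 : (addST G A B).Step (Sum.inl '' X) (Sum.inl '' F)
          (Sum.inr true) (Sum.inl a) := by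
        refine ⟨by simp, ?_, Sum.inr (Sum.inl ⟨a, ha⟩), by simp, rfl⟩
        rintro ⟨x, hxX, hx⟩
        exact haX (Sum.inl.inj hx ▸ hxX)
      have step2 : (addST G A B).Step (Sum.inl '' X) (Sum.inl '' F)
          (Sum.inl a) (Sum.inl b) := by
        refine ⟨?_, ?_, Sum.inl e, ?_, ?_⟩
        · rintro ⟨x, hxX, hx⟩; exact haX (Sum.inl.inj hx ▸ hxX)
        · rintro ⟨x, hxX, hx⟩; exact hbX (Sum.inl.inj hx ▸ hxX)
        · rintro ⟨e', he', hee⟩; exact heF (Sum.inl.inj hee ▸ he')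
        · show (G.ends e).map Sum.inl = _
          rw [hends0]; rfl
      have step3 : (addST G A B).Step (Sum.inl '' X) (Sum.inl '' F)
          (Sum.inl b) (Sum.inr false) := by
        refine ⟨?_, by simp, Sum.inr (Sum.inr ⟨b, hb⟩), by simp, ?_⟩
        · rintro ⟨x, hxX, hx⟩; exact hbX (Sum.inl.inj hx ▸ hxX)
        · show s(Sum.inr false, Sum.inl b) = s(Sum.inl b, Sum.inr false)
          rw [Sym2.eq_swap]
      exact (Relation.ReflTransGen.single step1).tail step2 |>.tail step3
    have h1 : {e : E | ∃ x ∈ X, x ∈ G.ends e}.ncard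
        + {e : E | ∃ x ∈ X, x ∈ G.ends e}ᶜ.ncard = Fintype.card E := by
      rw [Set.ncard_add_ncard_compl, Nat.card_eq_fintype_card]
    have h2 : {e : E | ∃ x ∈ X, x ∈ G.ends e}ᶜ.ncard ≤ F.ncard :=
      Set.ncard_le_ncard hsub (Set.toFinite F)
    omega
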